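/- Let ρ_x be the law of a Galton–Watson tree with Geometric(1/2) offspring distribution (P(k children) = 2^{-k-1}) with independent uniform {-1,0,+1} label increments along edges and root label x > 0. Then the probability that all labels are positive equals w(x) = x(x+3)/((x+1)(x+2)). Equivalently, ∑_{n≥0} |𝕋_n^+(x)|/(2·12^n) = w(x), where 𝕋_n^+(x) is the set of well-labeled trees with n edges, root label x, and all labels positive. -/

import Mathlib

-- A plane rooted tree with integer increments on edges: a tree is a node together
-- with the (ordered) forest of its subtrees, each subtree carrying the label increment
-- of the edge to its root.
mutual
  inductive PTree : Type where
    | node : PForest → PTree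
  inductive PForest : Type where
    | nil : PForest
    | cons : ℤ → PTree → PForest → PForest
end

mutual
  def PTree.edges : PTree → ℕ
    | .node f => PForest.edges f
  def PForest.edges : PForest → ℕ
    | .nil => 0
    | .cons _ t f => 1 + PTree.edges t + PForest.edges f
end

-- A labeled tree is well-labeled when every edge increment lies in `{-1,0,1}`.
mutual
  def PTree.ok : PTree → Prop
    | .node f => PForest.ok f
  def PForest.ok : PForest → Prop
    | .nil => True
    | .cons i t f => (i = -1 ∨ i = 0 ∨ i = 1) ∧ PTree.ok t ∧ PForest.ok f
end

-- `PTree.pos x t` says that, when the root of `t` carries the label `x`, all the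
-- labels of `t` (obtained by accumulating the edge increments) are positive.
mutual
  def PTree.pos : ℤ → PTree → Prop
    | x, .node f => 0 < x ∧ PForest.pos x f
  def PForest.pos : ℤ → PForest → Prop
    | _, .nil => True
    | x, .cons i t f => PTree.pos (x + i) t ∧ PForest.pos x f
end

open scoped ENNReal Classical

noncomputable section

namespace CD

/-- generic decomposition of a sum over forests -/
theorem forest_tsum (F : PForest → ℝ≥0∞) :
    ∑' f, F f = F .nil + ∑' (i : ℤ), ∑' (t : PTree), ∑' (f : PForest), F (.cons i t f) := by
  rw [ENNReal.tsum_eq_add_tsum_ite PForest.nil]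
  congr 1
  have hinj : Function.Injective (fun p : ℤ × PTree × PForest => PForest.cons p.1 p.2.1 p.2.2) := by
    rintro ⟨i, t, f⟩ ⟨j, u, g⟩ h
    simpa using h
  have hsup : Function.support (fun f => if f = PForest.nil then 0 else F f) ⊆
      Set.range (fun p : ℤ × PTree × PForest => PForest.cons p.1 p.2.1 p.2.2) := by
    intro f hf
    rcases f with _ | ⟨i, t, f⟩
    · simp at hf
    · exact ⟨⟨i, t, f⟩, rfl⟩
  rw [← hinj.tsum_eq hsup, ENNReal.tsum_prod']
  refine tsum_congr fun i => ?_
  rw [ENNReal.tsum_prod']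
  exact tsum_congr fun t => tsum_congr fun f => by simp

/-- generic decomposition of a sum over trees -/
theorem tree_tsum (G : PTree → ℝ≥0∞) : ∑' t, G t = ∑' f, G (.node f) := by
  have hinj : Function.Injective PTree.node := fun a b h => by injection h
  have hsup : Function.support G ⊆ Set.range PTree.node := by
    intro t _; rcases t with ⟨f⟩; exact ⟨f, rfl⟩
  exact (hinj.tsum_eq hsup).symm

def gT (x : ℤ) (t : PTree) : ℝ≥0∞ := if t.ok ∧ t.pos x then (12 : ℝ≥0∞)⁻¹ ^ t.edges else 0
def gF (x : ℤ) (f : PForest) : ℝ≥0∞ := if f.ok ∧ f.pos x then (12 : ℝ≥0∞)⁻¹ ^ f.edges else 0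

def chi (i : ℤ) : ℝ≥0∞ := if i = -1 ∨ i = 0 ∨ i = 1 then (12 : ℝ≥0∞)⁻¹ else 0

theorem gT_node (x : ℤ) (f : PForest) : gT x (.node f) = if 0 < x then gF x f else 0 := by
  simp only [gT, gF, PTree.ok, PTree.pos, PTree.edges]
  by_cases h : 0 < x <;> by_cases h2 : f.ok ∧ PForest.pos x f <;> simp [h, h2] <;> tauto

theorem gT_of_nonpos (x : ℤ) (hx : x ≤ 0) (t : PTree) : gT x t = 0 := by
  rcases t with ⟨f⟩
  rw [gT_node, if_neg (by omega)]

theorem gF_nil (x : ℤ) : gF x .nil = 1 := by simp [gF, PForest.ok, PForest.pos, PForest.edges]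

theorem gF_cons (x i : ℤ) (t : PTree) (f : PForest) :
    gF x (.cons i t f) = chi i * gT (x + i) t * gF x f := by
  simp only [gF, gT, chi, PForest.ok, PForest.pos, PForest.edges]
  by_cases h1 : i = -1 ∨ i = 0 ∨ i = 1 <;>
    by_cases h2 : t.ok ∧ t.pos (x + i) <;>
      by_cases h3 : f.ok ∧ PForest.pos x f <;>
        simp [h1, h2, h3, pow_add, pow_succ, mul_comm, mul_assoc, mul_left_comm] <;> tauto

def ST (x : ℤ) : ℝ≥0∞ := ∑' t, gT x t
def SF (x : ℤ) : ℝ≥0∞ := ∑' f, gF x f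

theorem ST_eq (x : ℤ) : ST x = if 0 < x then SF x else 0 := by
  rw [ST, tree_tsum]
  by_cases h : 0 < x
  · rw [if_pos h]; exact tsum_congr fun f => by rw [gT_node, if_pos h]
  · rw [if_neg h]; simp [fun f => gT_of_nonpos x (by omega) (PTree.node f)]

/-- sum over i : ℤ of a function supported on {-1,0,1} -/
theorem zsum_chi (h : ℤ → ℝ≥0∞) :
    ∑' i : ℤ, chi i * h i = (12 : ℝ≥0∞)⁻¹ * (h (-1) + h 0 + h 1) := by
  have hs : ∑' i : ℤ, chi i * h i = ∑ i ∈ ({-1, 0, 1} : Finset ℤ), chi i * h i := by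
    refine tsum_eq_sum fun i hi => ?_
    have : ¬(i = -1 ∨ i = 0 ∨ i = 1) := by simpa using hi
    simp [chi, this]
  rw [hs]
  rw [show ({-1, 0, 1} : Finset ℤ) = insert (-1) (insert 0 {1}) from rfl]
  rw [Finset.sum_insert (by decide), Finset.sum_insert (by decide), Finset.sum_singleton]
  have c1 : chi (-1) = (12 : ℝ≥0∞)⁻¹ := by simp [chi]
  have c2 : chi 0 = (12 : ℝ≥0∞)⁻¹ := by simp [chi]
  have c3 : chi 1 = (12 : ℝ≥0∞)⁻¹ := by simp [chi]
  rw [c1, c2, c3]; ring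

theorem SF_eq (x : ℤ) :
    SF x = 1 + (12 : ℝ≥0∞)⁻¹ * (ST (x - 1) + ST x + ST (x + 1)) * SF x := by
  have key : ∀ (i : ℤ) (t : PTree),
      (∑' (f : PForest), gF x (.cons i t f)) = chi i * gT (x + i) t * SF x := by
    intro i t
    calc ∑' (f : PForest), gF x (.cons i t f)
        = ∑' (f : PForest), chi i * gT (x + i) t * gF x f :=
          tsum_congr fun f => gF_cons x i t f
      _ = chi i * gT (x + i) t * ∑' (f : PForest), gF x f := ENNReal.tsum_mul_left
      _ = chi i * gT (x + i) t * SF x := rfl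
  have key2 : ∀ i : ℤ, (∑' (t : PTree) (f : PForest), gF x (.cons i t f))
      = chi i * (ST (x + i) * SF x) := by
    intro i
    calc (∑' (t : PTree) (f : PForest), gF x (.cons i t f))
        = ∑' (t : PTree), chi i * gT (x + i) t * SF x := tsum_congr fun t => key i t
      _ = ∑' (t : PTree), chi i * (gT (x + i) t * SF x) := tsum_congr fun t => by ring
      _ = chi i * ∑' (t : PTree), gT (x + i) t * SF x := ENNReal.tsum_mul_left
      _ = chi i * ((∑' (t : PTree), gT (x + i) t) * SF x) := by rw [ENNReal.tsum_mul_right]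
      _ = chi i * (ST (x + i) * SF x) := rfl
  have h0 : SF x = gF x .nil + ∑' (i : ℤ) (t : PTree) (f : PForest), gF x (.cons i t f) :=
    forest_tsum (gF x)
  rw [gF_nil, tsum_congr key2, zsum_chi (fun i => ST (x + i) * SF x),
    show x + -1 = x - 1 by ring, show x + 0 = x by ring] at h0
  exact h0.trans (by ring)

/-! ### Truncated sums and the upper bound -/

def gTe (N : ℕ) (x : ℤ) (t : PTree) : ℝ≥0∞ := if t.edges < N then gT x t else 0
def gFe (N : ℕ) (x : ℤ) (f : PForest) : ℝ≥0∞ := if f.edges < N then gF x f else 0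

def ET (N : ℕ) (x : ℤ) : ℝ≥0∞ := ∑' t, gTe N x t
def EF (N : ℕ) (x : ℤ) : ℝ≥0∞ := ∑' f, gFe N x f

theorem triple_sum (a : ℤ → PTree → ℝ≥0∞) (b : PForest → ℝ≥0∞) :
    (∑' (i : ℤ) (t : PTree) (f : PForest), chi i * a i t * b f)
      = (12 : ℝ≥0∞)⁻¹ * ((∑' t, a (-1) t) + (∑' t, a 0 t) + (∑' t, a 1 t)) * (∑' f, b f) := by
  have key2 : ∀ i : ℤ, (∑' (t : PTree) (f : PForest), chi i * a i t * b f)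
      = chi i * ((∑' t, a i t) * (∑' f, b f)) := by
    intro i
    calc (∑' (t : PTree) (f : PForest), chi i * a i t * b f)
        = ∑' (t : PTree), chi i * a i t * ∑' f, b f :=
          tsum_congr fun t => ENNReal.tsum_mul_left
      _ = ∑' (t : PTree), chi i * (a i t * ∑' f, b f) := tsum_congr fun t => by ring
      _ = chi i * ∑' (t : PTree), a i t * ∑' f, b f := ENNReal.tsum_mul_left
      _ = chi i * ((∑' t, a i t) * (∑' f, b f)) := by rw [ENNReal.tsum_mul_right]
  rw [tsum_congr key2, zsum_chi (fun i => (∑' t, a i t) * (∑' f, b f))]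
  ring

theorem gTe_node (N : ℕ) (x : ℤ) (f : PForest) :
    gTe N x (.node f) = if 0 < x then gFe N x f else 0 := by
  have he : (PTree.node f).edges = f.edges := by simp [PTree.edges]
  simp only [gTe, gFe, he, gT_node]
  by_cases h1 : f.edges < N <;> by_cases h2 : 0 < x <;> simp [h1, h2]

theorem ET_eq (N : ℕ) (x : ℤ) : ET N x = if 0 < x then EF N x else 0 := by
  rw [ET, tree_tsum]
  by_cases h : 0 < x
  · rw [if_pos h]; exact tsum_congr fun f => by rw [gTe_node, if_pos h]
  · rw [if_neg h]
    have : ∀ f : PForest, gTe N x (.node f) = 0 := fun f => by rw [gTe_node, if_neg h]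
    simp [this]

theorem EF_succ_le (N : ℕ) (x : ℤ) :
    EF (N + 1) x ≤ 1 + (12 : ℝ≥0∞)⁻¹ * (ET N (x - 1) + ET N x + ET N (x + 1)) * EF N x := by
  have hpt : ∀ (i : ℤ) (t : PTree) (f : PForest),
      gFe (N + 1) x (.cons i t f) ≤ chi i * gTe N (x + i) t * gFe N x f := by
    intro i t f
    by_cases h : (PForest.cons i t f).edges < N + 1
    · have he : (PForest.cons i t f).edges = 1 + t.edges + f.edges := by simp [PForest.edges]
      have h1 : t.edges < N := by omega
      have h2 : f.edges < N := by omega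
      rw [gFe, if_pos h, gF_cons, gTe, if_pos h1, gFe, if_pos h2]
    · rw [gFe, if_neg h]; exact zero_le
  have h0 : EF (N + 1) x
      = gFe (N + 1) x .nil + ∑' (i : ℤ) (t : PTree) (f : PForest), gFe (N + 1) x (.cons i t f) :=
    forest_tsum (gFe (N + 1) x)
  have hnil : gFe (N + 1) x .nil = 1 := by
    rw [gFe, if_pos (by simp [PForest.edges]), gF_nil]
  rw [h0, hnil]
  refine add_le_add le_rfl ?_
  refine le_trans (ENNReal.tsum_le_tsum fun i => ENNReal.tsum_le_tsum fun t =>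
    ENNReal.tsum_le_tsum fun f => hpt i t f) ?_
  rw [triple_sum (fun i t => gTe N (x + i) t) (gFe N x)]
  rw [show x + -1 = x - 1 by ring, show x + 0 = x by ring]
  exact le_rfl

/-! ### The candidate function -/

def Cr (x : ℤ) : ℝ :=
  if 0 < x then 2 * ((x : ℝ) * ((x : ℝ) + 3)) / (((x : ℝ) + 1) * ((x : ℝ) + 2)) else 0

theorem Cr_nonneg (x : ℤ) : 0 ≤ Cr x := by
  rw [Cr]
  split_ifs with h
  · have hx : (1 : ℝ) ≤ (x : ℝ) := by exact_mod_cast h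
    positivity
  · exact le_rfl

theorem Cr_le_two (x : ℤ) : Cr x ≤ 2 := by
  rw [Cr]
  split_ifs with h
  · have hx : (1 : ℝ) ≤ (x : ℝ) := by exact_mod_cast h
    rw [div_le_iff₀ (by positivity)]
    nlinarith
  · norm_num

theorem Cr_sub_one (x : ℤ) (h : 0 < x) :
    Cr (x - 1) = 2 * (((x : ℝ) - 1) * ((x : ℝ) + 2)) / ((x : ℝ) * ((x : ℝ) + 1)) := by
  by_cases hx1 : x = 1
  · subst hx1
    norm_num [Cr]
  · rw [Cr, if_pos (by omega)]
    push_cast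
    ring_nf

theorem Cr_fixed (x : ℤ) (h : 0 < x) :
    Cr x = 1 + (1 / 12) * (Cr (x - 1) + Cr x + Cr (x + 1)) * Cr x := by
  have hx : (1 : ℝ) ≤ (x : ℝ) := by exact_mod_cast h
  rw [Cr_sub_one x h, Cr, if_pos h, Cr, if_pos (by omega)]
  push_cast
  have h0 : (x : ℝ) ≠ 0 := by linarith
  have h1 : (x : ℝ) + 1 ≠ 0 := by linarith
  have h2 : (x : ℝ) + 2 ≠ 0 := by linarith
  have h3 : (x : ℝ) + 3 ≠ 0 := by linarith
  field_simp
  ring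

def cE (x : ℤ) : ℝ≥0∞ := ENNReal.ofReal (Cr x)

theorem inv12 : (12 : ℝ≥0∞)⁻¹ = ENNReal.ofReal (1 / 12) := by
  rw [ENNReal.ofReal_div_of_pos (by norm_num), ENNReal.ofReal_one, ENNReal.ofReal_ofNat,
    one_div]

theorem cE_fixed (x : ℤ) (h : 0 < x) :
    cE x = 1 + (12 : ℝ≥0∞)⁻¹ * (cE (x - 1) + cE x + cE (x + 1)) * cE x := by
  have key := Cr_fixed x h
  have hsum : (0:ℝ) ≤ Cr (x - 1) + Cr x + Cr (x + 1) := by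
    have := Cr_nonneg (x - 1); have := Cr_nonneg x; have := Cr_nonneg (x + 1); linarith
  calc cE x = ENNReal.ofReal (1 + (1 / 12) * (Cr (x - 1) + Cr x + Cr (x + 1)) * Cr x) := by
        rw [cE, ← key]
    _ = 1 + (12 : ℝ≥0∞)⁻¹ * (cE (x - 1) + cE x + cE (x + 1)) * cE x := by
        rw [ENNReal.ofReal_add (by norm_num)
            (mul_nonneg (mul_nonneg (by norm_num) hsum) (Cr_nonneg x)),
          ENNReal.ofReal_mul (mul_nonneg (by norm_num) hsum), ENNReal.ofReal_mul (by norm_num),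
          ENNReal.ofReal_add (by { have := Cr_nonneg (x-1); have := Cr_nonneg x; linarith })
            (Cr_nonneg (x+1)),
          ENNReal.ofReal_add (Cr_nonneg (x-1)) (Cr_nonneg x),
          ENNReal.ofReal_one, inv12]
        rfl

theorem EF_le (N : ℕ) : ∀ x : ℤ, 0 < x → EF N x ≤ cE x := by
  induction N with
  | zero =>
    intro x _
    have : ∀ f : PForest, gFe 0 x f = 0 := fun f => by rw [gFe, if_neg (by omega)]
    rw [EF]
    simp [this]
  | succ N ih =>
    intro x hx
    have hET : ∀ y : ℤ, 0 ≤ y → ET N y ≤ cE y := by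
      intro y hy
      rw [ET_eq]
      split_ifs with h
      · exact ih y h
      · exact zero_le
    refine le_trans (EF_succ_le N x) ?_
    have step : 1 + (12 : ℝ≥0∞)⁻¹ * (ET N (x - 1) + ET N x + ET N (x + 1)) * EF N x
        ≤ 1 + (12 : ℝ≥0∞)⁻¹ * (cE (x - 1) + cE x + cE (x + 1)) * cE x := by
      refine add_le_add le_rfl (mul_le_mul' (mul_le_mul' le_rfl ?_) (ih x hx))
      exact add_le_add (add_le_add (hET _ (by omega)) (hET _ (by omega))) (hET _ (by omega))
    exact step.trans (le_of_eq (cE_fixed x hx).symm)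

/-! ### Bounding the full sum -/

theorem ST_zero (x : ℤ) (hx : x ≤ 0) : ST x = 0 := by
  rw [ST]
  simp [fun t => gT_of_nonpos x hx t]

theorem ST_le (x : ℤ) : ST x ≤ cE x := by
  by_cases hx : 0 < x
  · rw [ST, ENNReal.tsum_eq_iSup_sum]
    refine iSup_le fun s => ?_
    set N := (s.sup PTree.edges) + 1 with hN
    have h1 : ∑ t ∈ s, gT x t = ∑ t ∈ s, gTe N x t := by
      refine Finset.sum_congr rfl fun t ht => ?_
      rw [gTe, if_pos (Nat.lt_succ_of_le (Finset.le_sup ht))]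
    rw [h1]
    refine le_trans (Summable.sum_le_tsum s (fun t _ => zero_le) ENNReal.summable) ?_
    have h2 : (∑' t, gTe N x t) = ET N x := rfl
    rw [h2, ET_eq, if_pos hx]
    exact EF_le N x hx
  · rw [ST_zero x (by omega)]
    exact zero_le

theorem ST_ne_top (x : ℤ) : ST x ≠ ⊤ :=
  ((ST_le x).trans_lt ENNReal.ofReal_lt_top).ne

theorem ST_fixed (x : ℤ) (hx : 0 < x) :
    ST x = 1 + (12 : ℝ≥0∞)⁻¹ * (ST (x - 1) + ST x + ST (x + 1)) * ST x := by
  have h : ST x = SF x := by rw [ST_eq, if_pos hx]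
  have h2 := SF_eq x
  rw [← h] at h2
  exact h2

/-! ### The real-valued sum -/

def sR (x : ℤ) : ℝ := (ST x).toReal

theorem sR_nonneg (x : ℤ) : 0 ≤ sR x := ENNReal.toReal_nonneg

theorem sR_zero (x : ℤ) (hx : x ≤ 0) : sR x = 0 := by rw [sR, ST_zero x hx]; rfl

theorem sR_le_Cr (x : ℤ) : sR x ≤ Cr x := by
  have h := ENNReal.toReal_mono ENNReal.ofReal_ne_top (ST_le x)
  rwa [ENNReal.toReal_ofReal (Cr_nonneg x)] at h

theorem sR_le_two (x : ℤ) : sR x ≤ 2 := (sR_le_Cr x).trans (Cr_le_two x)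

theorem sR_fixed (x : ℤ) (hx : 0 < x) :
    sR x = 1 + (1 / 12) * (sR (x - 1) + sR x + sR (x + 1)) * sR x := by
  have h := congrArg ENNReal.toReal (ST_fixed x hx)
  have h12 : (12 : ℝ≥0∞)⁻¹ ≠ ⊤ := ENNReal.inv_ne_top.mpr (by norm_num)
  have hsum : ST (x - 1) + ST x + ST (x + 1) ≠ ⊤ :=
    ENNReal.add_ne_top.mpr ⟨ENNReal.add_ne_top.mpr ⟨ST_ne_top _, ST_ne_top _⟩, ST_ne_top _⟩
  rw [ENNReal.toReal_add (by norm_num)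
      (ENNReal.mul_ne_top (ENNReal.mul_ne_top h12 hsum) (ST_ne_top x)),
    ENNReal.toReal_mul, ENNReal.toReal_mul, ENNReal.toReal_add
      (ENNReal.add_ne_top.mpr ⟨ST_ne_top _, ST_ne_top _⟩) (ST_ne_top _),
    ENNReal.toReal_add (ST_ne_top _) (ST_ne_top _), ENNReal.toReal_one,
    ENNReal.toReal_inv, ENNReal.toReal_ofNat] at h
  rw [show (12 : ℝ)⁻¹ = 1 / 12 by norm_num] at h
  exact h

/-! ### Uniqueness: the deficiency is identically zero -/

theorem seq_zero (f : ℕ → ℝ) (h0 : f 0 = 0) (hnn : ∀ n, 0 ≤ f n) (hb : ∀ n, f n ≤ 2)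
    (hconv : ∀ n, 2 * f (n + 1) ≤ f n + f (n + 2)) : ∀ n, f n = 0 := by
  set d : ℕ → ℝ := fun n => f (n + 1) - f n with hd
  have hmono : Monotone d := by
    refine monotone_nat_of_le_succ fun n => ?_
    have := hconv n
    simp only [hd]
    nlinarith
  have hgrow : ∀ n k : ℕ, f n + k * d n ≤ f (n + k) := by
    intro n k
    induction k with
    | zero => simp
    | succ k ih =>
      have h1 : d n ≤ d (n + k) := hmono (by omega)
      have h2 : f (n + k) + d (n + k) = f (n + k + 1) := by simp [hd]
      have h3 : n + (k + 1) = n + k + 1 := by omega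
      rw [h3]
      push_cast
      nlinarith
  have hdle : ∀ n, d n ≤ 0 := by
    intro n
    by_contra hpos
    push_neg at hpos
    obtain ⟨k, hk⟩ := exists_nat_gt (2 / d n)
    have h1 := hgrow n k
    have h2 : 2 < (k : ℝ) * d n := by
      rw [div_lt_iff₀ hpos] at hk
      linarith
    have := hb (n + k)
    have := hnn n
    linarith
  intro n
  have hanti : ∀ m, f (m + 1) ≤ f m := fun m => by have := hdle m; simp [hd] at this; linarith
  have hle : ∀ m, f m ≤ 0 := by
    intro m
    induction m with
    | zero => simp [h0]
    | succ m ih => linarith [hanti m]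
  exact le_antisymm (hle n) (hnn n)

theorem D_key (x : ℤ) (hx : 0 < x) :
    Cr x - sR x = (1 / 12) * (Cr x * sR x) *
      ((Cr (x - 1) - sR (x - 1)) + (Cr x - sR x) + (Cr (x + 1) - sR (x + 1))) := by
  have e1 := Cr_fixed x hx
  have e2 := sR_fixed x hx
  linear_combination (sR x) * e1 - (Cr x) * e2

theorem D_conv (x : ℤ) (hx : 0 < x) :
    2 * (Cr x - sR x) ≤ (Cr (x - 1) - sR (x - 1)) + (Cr (x + 1) - sR (x + 1)) := by
  have key := D_key x hx
  have h1 : 0 ≤ Cr (x - 1) - sR (x - 1) := by linarith [sR_le_Cr (x - 1)]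
  have h2 : 0 ≤ Cr x - sR x := by linarith [sR_le_Cr x]
  have h3 : 0 ≤ Cr (x + 1) - sR (x + 1) := by linarith [sR_le_Cr (x + 1)]
  have hb : Cr x * sR x ≤ 4 := by
    nlinarith [Cr_le_two x, sR_le_two x, sR_nonneg x, Cr_nonneg x]
  nlinarith

theorem sR_eq_Cr (x : ℤ) (hx : 0 ≤ x) : sR x = Cr x := by
  have main := seq_zero (fun n => Cr (n : ℤ) - sR (n : ℤ))
  have h0 : Cr ((0 : ℕ) : ℤ) - sR ((0 : ℕ) : ℤ) = 0 := by
    norm_num [Cr, sR_zero 0 le_rfl]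
  have hnn : ∀ n : ℕ, 0 ≤ Cr (n : ℤ) - sR (n : ℤ) := fun n => by linarith [sR_le_Cr (n : ℤ)]
  have hb : ∀ n : ℕ, Cr (n : ℤ) - sR (n : ℤ) ≤ 2 := fun n => by
    linarith [Cr_le_two (n : ℤ), sR_nonneg (n : ℤ)]
  have hconv : ∀ n : ℕ, 2 * (Cr ((n + 1 : ℕ) : ℤ) - sR ((n + 1 : ℕ) : ℤ))
      ≤ (Cr ((n : ℕ) : ℤ) - sR ((n : ℕ) : ℤ)) + (Cr ((n + 2 : ℕ) : ℤ) - sR ((n + 2 : ℕ) : ℤ)) := by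
    intro n
    have := D_conv ((n : ℤ) + 1) (by omega)
    have e1 : ((n : ℤ) + 1) - 1 = (n : ℤ) := by ring
    have e2 : ((n : ℤ) + 1) + 1 = ((n + 2 : ℕ) : ℤ) := by push_cast; ring
    have e3 : ((n + 1 : ℕ) : ℤ) = (n : ℤ) + 1 := by push_cast; ring
    rw [e1, e2] at this
    rw [e3]
    linarith
  have := main h0 hnn hb hconv
  obtain ⟨n, rfl⟩ : ∃ n : ℕ, (n : ℤ) = x := ⟨x.toNat, by omega⟩
  linarith [this n]

/-! ### Finiteness and counting -/

theorem fin_pair : ∀ n : ℕ, {t : PTree | t.ok ∧ t.edges ≤ n}.Finite ∧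
    {f : PForest | f.ok ∧ f.edges ≤ n}.Finite := by
  have tree_step : ∀ n : ℕ, {f : PForest | f.ok ∧ f.edges ≤ n}.Finite →
      {t : PTree | t.ok ∧ t.edges ≤ n}.Finite := by
    intro n hF
    refine Set.Finite.subset (hF.image PTree.node) ?_
    rintro ⟨f⟩ ⟨hok, he⟩
    refine ⟨f, ⟨?_, ?_⟩, rfl⟩
    · simpa [PTree.ok] using hok
    · simpa [PTree.edges] using he
  intro n
  induction n with
  | zero =>
    have hF : {f : PForest | f.ok ∧ f.edges ≤ 0}.Finite := by
      refine Set.Finite.subset (Set.finite_singleton PForest.nil) ?_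
      rintro (_ | ⟨i, t, f⟩) ⟨hok, he⟩
      · exact Set.mem_singleton _
      · exfalso
        simp [PForest.edges] at he
    exact ⟨tree_step 0 hF, hF⟩
  | succ n ih =>
    have hF : {f : PForest | f.ok ∧ f.edges ≤ n + 1}.Finite := by
      have himg : (({-1, 0, 1} : Set ℤ) ×ˢ ({t : PTree | t.ok ∧ t.edges ≤ n} ×ˢ
          {f : PForest | f.ok ∧ f.edges ≤ n})).Finite :=
        (Set.toFinite _).prod (ih.1.prod ih.2)
      refine Set.Finite.subset ((Set.finite_singleton PForest.nil).union
        (himg.image (fun p : ℤ × PTree × PForest => PForest.cons p.1 p.2.1 p.2.2))) ?_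
      rintro (_ | ⟨i, t, f⟩) ⟨hok, he⟩
      · exact Or.inl (Set.mem_singleton _)
      · refine Or.inr ⟨⟨i, t, f⟩, ⟨?_, ?_, ?_⟩, rfl⟩
        · have : i = -1 ∨ i = 0 ∨ i = 1 := by
            have h := hok
            simp only [PForest.ok] at h
            exact h.1
          simpa using this
        · have h := hok
          simp only [PForest.ok] at h
          have he' : 1 + t.edges + f.edges ≤ n + 1 := by
            simpa [PForest.edges] using he
          show t.ok ∧ t.edges ≤ n
          exact ⟨h.2.1, by omega⟩
        · have h := hok
          simp only [PForest.ok] at h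
          have he' : 1 + t.edges + f.edges ≤ n + 1 := by
            simpa [PForest.edges] using he
          show f.ok ∧ f.edges ≤ n
          exact ⟨h.2.2, by omega⟩
    exact ⟨tree_step (n + 1) hF, hF⟩

theorem fin_slice (n : ℕ) (x : ℤ) : {t : PTree | t.ok ∧ t.edges = n ∧ t.pos x}.Finite := by
  refine Set.Finite.subset (fin_pair n).1 ?_
  rintro t ⟨hok, he, _⟩
  exact ⟨hok, le_of_eq he⟩

theorem ST_counts (x : ℤ) :
    ST x = ∑' n : ℕ,
      (Nat.card {t : PTree // t.ok ∧ t.edges = n ∧ t.pos x} : ℝ≥0∞) * (12 : ℝ≥0∞)⁻¹ ^ n := by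
  have step1 : ST x = ∑' (n : ℕ) (t : PTree), if n = t.edges then gT x t else 0 := by
    rw [← ENNReal.tsum_comm, ST]
    exact tsum_congr fun t => (tsum_ite_eq t.edges (fun _ => gT x t)).symm
  rw [step1]
  refine tsum_congr fun n => ?_
  have hA := fin_slice n x
  have hterm : ∀ t : PTree, (if n = t.edges then gT x t else 0)
      = if t ∈ {t : PTree | t.ok ∧ t.edges = n ∧ t.pos x} then (12 : ℝ≥0∞)⁻¹ ^ n else 0 := by
    intro t
    simp only [Set.mem_setOf_eq, gT]
    by_cases h1 : n = t.edges
    · by_cases h2 : t.ok ∧ t.pos x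
      · rw [if_pos h1, if_pos h2, if_pos ⟨h2.1, h1.symm, h2.2⟩, h1]
      · rw [if_pos h1, if_neg h2, if_neg (by tauto)]
    · rw [if_neg h1, if_neg (by tauto)]
  rw [tsum_congr hterm]
  rw [tsum_eq_sum (s := hA.toFinset) (fun t ht => by
    rw [if_neg]
    simpa using fun h => ht (hA.mem_toFinset.mpr h))]
  rw [Finset.sum_congr rfl (fun t ht => if_pos (hA.mem_toFinset.mp ht)), Finset.sum_const,
    nsmul_eq_mul]
  congr 1
  have h1 : hA.toFinset.card = {t : PTree | t.ok ∧ t.edges = n ∧ t.pos x}.ncard :=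
    (Set.ncard_eq_toFinset_card _ hA).symm
  rw [h1, ← Nat.card_coe_set_eq]
  rfl

end CD

end

open CD

/-- Under the law `ρ_x` of the Geometric(1/2) Galton–Watson tree with uniform
`{-1,0,1}` label increments and root label `x > 0` (which gives mass `1/(2·12^n)` to
each well-labeled tree with `n` edges), the probability that all labels are positive
is `w(x) = x(x+3)/((x+1)(x+2))`:
`∑_{n≥0} |𝕋_n^+(x)|/(2·12^n) = w(x)`. -/
theorem stmt_15 (x : ℕ) (hx : 0 < x) :
    ∑' n : ℕ,
        (Nat.card {t : PTree // t.ok ∧ t.edges = n ∧ t.pos (x : ℤ)} : ℝ) / (2 * 12 ^ n)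
      = (x : ℝ) * ((x : ℝ) + 3) / (((x : ℝ) + 1) * ((x : ℝ) + 2)) := by
  have hxz : (0 : ℤ) < (x : ℤ) := by exact_mod_cast hx
  set c : ℕ → ℕ := fun n => Nat.card {t : PTree // t.ok ∧ t.edges = n ∧ t.pos (x : ℤ)} with hc
  have hterm_ne : ∀ n : ℕ, (c n : ℝ≥0∞) * (12 : ℝ≥0∞)⁻¹ ^ n ≠ ⊤ := fun n =>
    ENNReal.mul_ne_top (ENNReal.natCast_ne_top _)
      (ENNReal.pow_ne_top (ENNReal.inv_ne_top.mpr (by norm_num)))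
  have key : sR (x : ℤ) = ∑' n : ℕ, (c n : ℝ) * (1 / 12 : ℝ) ^ n := by
    rw [sR, ST_counts, ENNReal.tsum_toReal_eq hterm_ne]
    refine tsum_congr fun n => ?_
    rw [ENNReal.toReal_mul, ENNReal.toReal_pow, ENNReal.toReal_natCast, ENNReal.toReal_inv,
      ENNReal.toReal_ofNat, one_div]
  have hcongr : ∀ n : ℕ, (c n : ℝ) / (2 * 12 ^ n) = (1 / 2) * ((c n : ℝ) * (1 / 12) ^ n) := by
    intro n
    have h12 : ((1 : ℝ) / 12) ^ n = 1 / 12 ^ n := by rw [div_pow, one_pow]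
    rw [h12]
    have hne : (12 : ℝ) ^ n ≠ 0 := by positivity
    field_simp
  calc ∑' n : ℕ, (c n : ℝ) / (2 * 12 ^ n)
      = ∑' n : ℕ, (1 / 2) * ((c n : ℝ) * (1 / 12) ^ n) := tsum_congr hcongr
    _ = (1 / 2) * ∑' n : ℕ, (c n : ℝ) * (1 / 12) ^ n := tsum_mul_left
    _ = (1 / 2) * sR (x : ℤ) := by rw [key]
    _ = (1 / 2) * Cr (x : ℤ) := by rw [sR_eq_Cr _ (by omega)]
    _ = (x : ℝ) * ((x : ℝ) + 3) / (((x : ℝ) + 1) * ((x : ℝ) + 2)) := by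
        rw [Cr, if_pos hxz]
        push_cast
        ring
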